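/- Let f : ℝ → X be a bounded non-increasing function into a Banach lattice X such that the closure of the range of f is compact. Then the set of points at which f is discontinuous is at most countable. -/

import Mathlib

open Filter Topology Set

section Aux

variable {X : Type*} [NormedAddCommGroup X] [Lattice X] [HasSolidNorm X] [IsOrderedAddMonoid X]

private lemma aux_tendsto_sub_one_div (x : ℝ) :
    Tendsto (fun n : ℕ => x - 1 / (n + 1)) atTop (𝓝 x) := by
  simpa using tendsto_const_nhds.sub (tendsto_one_div_add_atTop_nhds_zero_nat (𝕜 := ℝ))

private lemma aux_tendsto_add_one_div (x : ℝ) :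
    Tendsto (fun n : ℕ => x + 1 / (n + 1)) atTop (𝓝 x) := by
  simpa using tendsto_const_nhds.add (tendsto_one_div_add_atTop_nhds_zero_nat (𝕜 := ℝ))

private lemma exists_left_limit (f : ℝ → X) (hf : Antitone f)
    (hc : IsCompact (closure (Set.range f))) (x : ℝ) :
    ∃ l, Tendsto f (𝓝[<] x) (𝓝 l) := by
  set t : ℕ → ℝ := fun n => x - 1 / (n + 1) with ht
  have htx : Tendsto t atTop (𝓝 x) := aux_tendsto_sub_one_div x
  have htlt : ∀ n, t n < x := by
    intro n
    have : (0:ℝ) < 1 / (n + 1) := by positivity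
    simp only [ht]
    linarith
  obtain ⟨l, -, φ, hφ, hconv⟩ := hc.tendsto_subseq (x := fun n => f (t n))
      (fun n => subset_closure (mem_range_self _))
  refine ⟨l, Metric.tendsto_nhds.mpr fun ε hε => ?_⟩
  obtain ⟨N, hN⟩ := (Metric.tendsto_nhds.mp hconv ε hε).exists
  have hmem : Ioo (t (φ N)) x ∈ 𝓝[<] x := Ioo_mem_nhdsLT_of_mem ⟨htlt _, le_rfl⟩
  filter_upwards [hmem] with s hs
  have hls : l ≤ f s := by
    have hev : ∀ᶠ k in atTop, ((fun n => f (t n)) ∘ φ) k ≤ f s := by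
      have h1 : ∀ᶠ k in atTop, s < t (φ k) :=
        (htx.comp hφ.tendsto_atTop).eventually (eventually_gt_nhds hs.2)
      exact h1.mono fun k hk => hf hk.le
    exact le_of_tendsto hconv hev
  have h2 : f s ≤ f (t (φ N)) := hf hs.1.le
  have hsolid : ‖f s - l‖ ≤ ‖f (t (φ N)) - l‖ := by
    apply HasSolidNorm.solid
    rw [abs_of_nonneg (sub_nonneg.2 hls), abs_of_nonneg (sub_nonneg.2 (hls.trans h2))]
    exact sub_le_sub_right h2 l
  calc dist (f s) l = ‖f s - l‖ := dist_eq_norm _ _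
    _ ≤ ‖f (t (φ N)) - l‖ := hsolid
    _ = dist (f (t (φ N))) l := (dist_eq_norm _ _).symm
    _ < ε := hN

private lemma exists_right_limit (f : ℝ → X) (hf : Antitone f)
    (hc : IsCompact (closure (Set.range f))) (x : ℝ) :
    ∃ l, Tendsto f (𝓝[>] x) (𝓝 l) := by
  set t : ℕ → ℝ := fun n => x + 1 / (n + 1) with ht
  have htx : Tendsto t atTop (𝓝 x) := aux_tendsto_add_one_div x
  have htlt : ∀ n, x < t n := by
    intro n
    have : (0:ℝ) < 1 / (n + 1) := by positivity
    simp only [ht]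
    linarith
  obtain ⟨l, -, φ, hφ, hconv⟩ := hc.tendsto_subseq (x := fun n => f (t n))
      (fun n => subset_closure (mem_range_self _))
  refine ⟨l, Metric.tendsto_nhds.mpr fun ε hε => ?_⟩
  obtain ⟨N, hN⟩ := (Metric.tendsto_nhds.mp hconv ε hε).exists
  have hmem : Ioo x (t (φ N)) ∈ 𝓝[>] x := Ioo_mem_nhdsGT_of_mem ⟨le_rfl, htlt _⟩
  filter_upwards [hmem] with s hs
  have hls : f s ≤ l := by
    have hev : ∀ᶠ k in atTop, f s ≤ ((fun n => f (t n)) ∘ φ) k := by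
      have h1 : ∀ᶠ k in atTop, t (φ k) < s :=
        (htx.comp hφ.tendsto_atTop).eventually (eventually_lt_nhds hs.1)
      exact h1.mono fun k hk => hf hk.le
    exact ge_of_tendsto hconv hev
  have h2 : f (t (φ N)) ≤ f s := hf hs.2.le
  have hsolid : ‖l - f s‖ ≤ ‖l - f (t (φ N))‖ := by
    apply HasSolidNorm.solid
    rw [abs_of_nonneg (sub_nonneg.2 hls), abs_of_nonneg (sub_nonneg.2 (h2.trans hls))]
    exact sub_le_sub_left h2 l
  calc dist (f s) l = ‖l - f s‖ := by rw [dist_comm, dist_eq_norm]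
    _ ≤ ‖l - f (t (φ N))‖ := hsolid
    _ = dist (f (t (φ N))) l := by rw [dist_comm, dist_eq_norm]
    _ < ε := hN

/-- A set of reals all of whose points are "isolated" by an open interval is countable. -/
private lemma countable_of_isolated {s : Set ℝ}
    (h : ∀ x ∈ s, ∃ p q : ℝ, p < x ∧ x < q ∧ ∀ y ∈ s, p < y → y < q → y = x) :
    s.Countable := by
  have key : ∀ x ∈ s, ∃ ab : ℚ × ℚ, (ab.1 : ℝ) < x ∧ x < ab.2 ∧
      ∀ y ∈ s, (ab.1 : ℝ) < y → y < ab.2 → y = x := by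
    intro x hx
    obtain ⟨p, q, hp, hq, hiso⟩ := h x hx
    obtain ⟨a, hpa, hax⟩ := exists_rat_btwn hp
    obtain ⟨b, hxb, hbq⟩ := exists_rat_btwn hq
    exact ⟨(a, b), hax, hxb, fun y hy hay hyb => hiso y hy (hpa.trans hay) (hyb.trans hbq)⟩
  classical
  set F : ℝ → ℚ × ℚ := fun x => if hx : ∃ ab : ℚ × ℚ, (ab.1 : ℝ) < x ∧ x < ab.2 ∧
      ∀ y ∈ s, (ab.1 : ℝ) < y → y < ab.2 → y = x then hx.choose else default with hF
  have hinj : Set.InjOn F s := by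
    intro x1 h1 x2 h2 heq
    have hx1 := key x1 h1
    have hx2 := key x2 h2
    have e1 : F x1 = hx1.choose := dif_pos hx1
    have e2 : F x2 = hx2.choose := dif_pos hx2
    obtain ⟨ha1, hb1, hiso1⟩ := hx1.choose_spec
    obtain ⟨ha2, hb2, _⟩ := hx2.choose_spec
    rw [e1] at heq; rw [e2] at heq
    rw [heq] at hiso1
    exact (hiso1 x2 h2 ha2 hb2).symm
  exact (Set.mapsTo_univ F s).countable_of_injOn hinj Set.countable_univ

end Aux

/-- A bounded non-increasing function into a Banach lattice with relatively compact
range has at most countably many points of discontinuity. -/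
theorem countable_discontinuities_of_antitone
    {X : Type*} [NormedAddCommGroup X] [Lattice X] [HasSolidNorm X] [IsOrderedAddMonoid X]
    [CompleteSpace X]
    (f : ℝ → X)
    (hf_anti : Antitone f)
    (hf_bdd : ∃ C : ℝ, ∀ x : ℝ, ‖f x‖ ≤ C)
    (hf_cpt : IsCompact (closure (Set.range f))) :
    {x : ℝ | ¬ ContinuousAt f x}.Countable := by
  classical
  choose L hL using exists_left_limit f hf_anti hf_cpt
  choose R hR using exists_right_limit f hf_anti hf_cpt
  -- order facts
  have hfL : ∀ x, f x ≤ L x := by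
    intro x
    refine ge_of_tendsto (hL x) ?_
    filter_upwards [self_mem_nhdsWithin] with s hs
    exact hf_anti (le_of_lt hs)
  have hRf : ∀ x, R x ≤ f x := by
    intro x
    refine le_of_tendsto (hR x) ?_
    filter_upwards [self_mem_nhdsWithin] with s hs
    exact hf_anti (le_of_lt hs)
  -- discontinuities have a nonzero jump L x - R x
  have key : {x : ℝ | ¬ ContinuousAt f x} ⊆ {x : ℝ | L x ≠ R x} := by
    intro x hx
    simp only [mem_setOf_eq] at hx ⊢
    intro hLR
    apply hx
    have hfx : L x = f x := le_antisymm (hLR ▸ (hRf x)) (hfL x)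
    have hfx' : R x = f x := hLR ▸ hfx
    rw [continuousAt_iff_continuous_left'_right']
    constructor
    · show Tendsto f (𝓝[<] x) (𝓝 (f x))
      rw [← hfx]; exact hL x
    · show Tendsto f (𝓝[>] x) (𝓝 (f x))
      rw [← hfx']; exact hR x
  -- the jump sets S ε
  have Scount : ∀ ε : ℝ, 0 < ε → {x : ℝ | ε ≤ ‖L x - R x‖}.Countable := by
    intro ε hε
    apply countable_of_isolated
    intro x _
    -- right side: interval (x, u) on which jumps are small
    have hx3 : (0:ℝ) < ε / 3 := by linarith
    obtain ⟨u, hu, hus⟩ : ∃ u ∈ Ioi x, ∀ s ∈ Ioo x u, dist (f s) (R x) < ε / 3 := by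
      have := (Metric.tendsto_nhds.mp (hR x) (ε / 3) hx3)
      rw [Filter.eventually_iff, mem_nhdsGT_iff_exists_Ioo_subset] at this
      obtain ⟨u, hu, hsub⟩ := this
      exact ⟨u, hu, fun s hs => hsub hs⟩
    obtain ⟨v, hv, hvs⟩ : ∃ v ∈ Iio x, ∀ s ∈ Ioo v x, dist (f s) (L x) < ε / 3 := by
      have := (Metric.tendsto_nhds.mp (hL x) (ε / 3) hx3)
      rw [Filter.eventually_iff, mem_nhdsLT_iff_exists_Ioo_subset] at this
      obtain ⟨v, hv, hsub⟩ := this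
      exact ⟨v, hv, fun s hs => hsub hs⟩
    refine ⟨v, u, hv, hu, ?_⟩
    intro y hy hvy hyu
    by_contra hne
    have hjump : ε ≤ ‖L y - R y‖ := hy
    rcases lt_or_gt_of_ne hne with hlt | hgt
    · -- y < x, use the left interval (v, x)
      have hLy : dist (L y) (L x) ≤ ε / 3 := by
        have ht : Tendsto (fun s => dist (f s) (L x)) (𝓝[<] y) (𝓝 (dist (L y) (L x))) :=
          (hL y).dist tendsto_const_nhds
        refine le_of_tendsto ht ?_
        filter_upwards [Ioo_mem_nhdsLT_of_mem (⟨hvy, le_rfl⟩ : y ∈ Ioc v y)] with s hs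
        exact (hvs s ⟨hs.1, hs.2.trans hlt⟩).le
      have hRy : dist (R y) (L x) ≤ ε / 3 := by
        have ht : Tendsto (fun s => dist (f s) (L x)) (𝓝[>] y) (𝓝 (dist (R y) (L x))) :=
          (hR y).dist tendsto_const_nhds
        refine le_of_tendsto ht ?_
        filter_upwards [Ioo_mem_nhdsGT_of_mem (⟨le_rfl, hlt⟩ : y ∈ Ico y x)] with s hs
        exact (hvs s ⟨hvy.trans hs.1, hs.2⟩).le
      have : ‖L y - R y‖ ≤ 2 * (ε / 3) := by
        have := (dist_triangle (L y) (L x) (R y))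
        rw [← dist_eq_norm]
        calc dist (L y) (R y) ≤ dist (L y) (L x) + dist (L x) (R y) := dist_triangle _ _ _
          _ = dist (L y) (L x) + dist (R y) (L x) := by rw [dist_comm (L x)]
          _ ≤ ε / 3 + ε / 3 := add_le_add hLy hRy
          _ = 2 * (ε / 3) := by ring
      linarith
    · -- x < y, use the right interval (x, u)
      have hLy : dist (L y) (R x) ≤ ε / 3 := by
        have ht : Tendsto (fun s => dist (f s) (R x)) (𝓝[<] y) (𝓝 (dist (L y) (R x))) :=
          (hL y).dist tendsto_const_nhds
        refine le_of_tendsto ht ?_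
        filter_upwards [Ioo_mem_nhdsLT_of_mem (⟨hgt, le_rfl⟩ : y ∈ Ioc x y)] with s hs
        exact (hus s ⟨hs.1, hs.2.trans hyu⟩).le
      have hRy : dist (R y) (R x) ≤ ε / 3 := by
        have ht : Tendsto (fun s => dist (f s) (R x)) (𝓝[>] y) (𝓝 (dist (R y) (R x))) :=
          (hR y).dist tendsto_const_nhds
        refine le_of_tendsto ht ?_
        filter_upwards [Ioo_mem_nhdsGT_of_mem (⟨le_rfl, hyu⟩ : y ∈ Ico y u)] with s hs
        exact (hus s ⟨hgt.trans hs.1, hs.2⟩).le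
      have : ‖L y - R y‖ ≤ 2 * (ε / 3) := by
        rw [← dist_eq_norm]
        calc dist (L y) (R y) ≤ dist (L y) (R x) + dist (R x) (R y) := dist_triangle _ _ _
          _ = dist (L y) (R x) + dist (R y) (R x) := by rw [dist_comm (R x)]
          _ ≤ ε / 3 + ε / 3 := add_le_add hLy hRy
          _ = 2 * (ε / 3) := by ring
      linarith
  -- conclude
  have hsub : {x : ℝ | L x ≠ R x} ⊆ ⋃ n : ℕ, {x : ℝ | 1 / (n + 1 : ℝ) ≤ ‖L x - R x‖} := by
    intro x hx
    have hpos : 0 < ‖L x - R x‖ := by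
      simpa [sub_eq_zero] using (norm_pos_iff).mpr (sub_ne_zero.mpr hx)
    obtain ⟨n, hn⟩ := exists_nat_one_div_lt hpos
    exact Set.mem_iUnion.mpr ⟨n, hn.le⟩
  refine Set.Countable.mono (key.trans hsub) ?_
  refine Set.countable_iUnion fun n => Scount _ ?_
  positivity
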